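/- arXiv:2212.12216 — 2 statements merged into one kernel-verified Lean document; each statement's English description precedes it below -/
import Mathlib

section
/- Let ν₁, ν₂, γ₁, γ₂ > 0, set t = √(ν₁/ν₂) and η = √(γ₁/γ₂), and let λ₀ = √(γ₁γ₂/(ν₁ν₂)). Then ω(λ₀) = t²((η - 1/t)/(η + t))², where ω(λ) = -((γ₁ - ν₂λ)/(γ₁ + ν₁λ))·((γ₂ - ν₁λ)/(γ₂ + ν₂λ)). Moreover, if η > 1/t, then 0 < ω(λ₀) < t² = ν₁/ν₂. -/
theorem stmt4 (ν₁ ν₂ γ₁ γ₂ : ℝ) (h1 : 0 < ν₁) (h2 : 0 < ν₂)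
    (hg1 : 0 < γ₁) (hg2 : 0 < γ₂)
    (t η lam₀ : ℝ)
    (ht : t = Real.sqrt (ν₁ / ν₂)) (hη : η = Real.sqrt (γ₁ / γ₂))
    (hlam₀ : lam₀ = Real.sqrt (γ₁ * γ₂ / (ν₁ * ν₂)))
    (ω : ℝ → ℝ)
    (hω : ∀ lam : ℝ, ω lam =
      -((γ₁ - ν₂ * lam) / (γ₁ + ν₁ * lam)) * ((γ₂ - ν₁ * lam) / (γ₂ + ν₂ * lam))) :
    ω lam₀ = t ^ 2 * ((η - 1 / t) / (η + t)) ^ 2 ∧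
    (1 / t < η → 0 < ω lam₀ ∧ ω lam₀ < t ^ 2 ∧ t ^ 2 = ν₁ / ν₂) := by
  set a := Real.sqrt ν₁ with ha
  set b := Real.sqrt ν₂ with hb
  set g := Real.sqrt γ₁ with hg
  set h := Real.sqrt γ₂ with hh
  have hapos : 0 < a := Real.sqrt_pos.mpr h1
  have hbpos : 0 < b := Real.sqrt_pos.mpr h2
  have hgpos : 0 < g := Real.sqrt_pos.mpr hg1
  have hhpos : 0 < h := Real.sqrt_pos.mpr hg2
  have ha2 : a ^ 2 = ν₁ := Real.sq_sqrt h1.le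
  have hb2 : b ^ 2 = ν₂ := Real.sq_sqrt h2.le
  have hg2' : g ^ 2 = γ₁ := Real.sq_sqrt hg1.le
  have hh2 : h ^ 2 = γ₂ := Real.sq_sqrt hg2.le
  have htab : t = a / b := by
    rw [ht, Real.sqrt_div h1.le]
  have hηgh : η = g / h := by
    rw [hη, Real.sqrt_div hg1.le]
  have hlam : lam₀ = g * h / (a * b) := by
    rw [hlam₀, Real.sqrt_div (by positivity), Real.sqrt_mul hg1.le, Real.sqrt_mul h1.le]
  have htpos : 0 < t := by rw [htab]; positivity
  have hlpos : 0 < lam₀ := by rw [hlam]; positivity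
  have hd1 : γ₁ + ν₁ * lam₀ > 0 := by positivity
  have hd2 : γ₂ + ν₂ * lam₀ > 0 := by positivity
  have key : ω lam₀ = ((g * a - h * b) / (g * b + h * a)) ^ 2 := by
    rw [hω, hlam, ← ha2, ← hb2, ← hg2', ← hh2]
    have hden : g * b + h * a ≠ 0 := by positivity
    field_simp
    ring
  have rhs : t ^ 2 * ((η - 1 / t) / (η + t)) ^ 2
      = ((g * a - h * b) / (g * b + h * a)) ^ 2 := by
    rw [htab, hηgh]
    have hden : g * b + h * a ≠ 0 := by positivity
    field_simp
  constructor
  · rw [key, rhs]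
  · intro hlt
    rw [htab, hηgh, div_lt_div_iff₀ (by positivity) (by positivity), one_mul,
      ← mul_div_assoc, lt_div_iff₀ hbpos] at hlt
    -- hlt : h * b < g * a
    refine ⟨?_, ?_, ?_⟩
    · rw [key]
      exact pow_pos (div_pos (by linarith) (by positivity)) 2
    · have h5 : (g * a - h * b) / (g * b + h * a) < a / b := by
        rw [div_lt_div_iff₀ (by positivity) hbpos]
        nlinarith [mul_pos hhpos (mul_pos hbpos hbpos), mul_pos hhpos (mul_pos hapos hapos)]
      have h4 : 0 ≤ (g * a - h * b) / (g * b + h * a) :=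
        div_nonneg (by linarith) (by positivity)
      rw [key, htab]
      exact pow_lt_pow_left₀ h5 h4 two_ne_zero
    · rw [htab, div_pow, ha2, hb2]
end

section
/- Let V be a finite-dimensional real inner product space, A, B symmetric positive definite operators on V, and δ_R, δ_B > 0 with δ_R + δ_B = 1. Suppose ⟨(A+B)u,u⟩ ≤ (1 + β)⟨Bu,u⟩ and ⟨(A+B)u,u⟩ ≤ (1 + α)⟨Au,u⟩ for all u, where α, β > 0. Then every eigenvalue λ of (δ_R²A⁻¹ + δ_B²B⁻¹)(A+B) satisfies δ_R² + δ_B² ≤ λ ≤ δ_R²(1+α) + δ_B²(1+β). -/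
open scoped RealInnerProductSpace

lemma cs_aux {V : Type*} [NormedAddCommGroup V] [InnerProductSpace ℝ V]
    (S : V →ₗ[ℝ] V) (hsym : LinearMap.IsSymmetric S)
    (hpos : ∀ u : V, 0 ≤ ⟪S u, u⟫) (u w : V) :
    ⟪S u, w⟫ ^ 2 ≤ ⟪S u, u⟫ * ⟪S w, w⟫ := by
  have hswu : ⟪S w, u⟫ = ⟪S u, w⟫ := by rw [hsym w u, real_inner_comm]
  have h : ∀ t : ℝ, 0 ≤ ⟪S w, w⟫ * (t * t) + (2 * ⟪S u, w⟫) * t + ⟪S u, u⟫ := by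
    intro t
    have h0 := hpos (u + t • w)
    simp only [map_add, map_smul, inner_add_left, inner_add_right,
      real_inner_smul_left, real_inner_smul_right] at h0
    rw [hswu] at h0
    nlinarith [h0]
  have hd := discrim_le_zero h
  rw [discrim] at hd
  nlinarith [hd]

theorem stmt16 {V : Type*} [NormedAddCommGroup V] [InnerProductSpace ℝ V]
    [FiniteDimensional ℝ V]
    (A B Ainv Binv : V →ₗ[ℝ] V)
    (hAsym : LinearMap.IsSymmetric A) (hBsym : LinearMap.IsSymmetric B)
    (hApos : ∀ u : V, u ≠ 0 → 0 < ⟪A u, u⟫)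
    (hBpos : ∀ u : V, u ≠ 0 → 0 < ⟪B u, u⟫)
    (hAi : A ∘ₗ Ainv = LinearMap.id ∧ Ainv ∘ₗ A = LinearMap.id)
    (hBi : B ∘ₗ Binv = LinearMap.id ∧ Binv ∘ₗ B = LinearMap.id)
    (δR δB : ℝ) (hδR : 0 < δR) (hδB : 0 < δB) (hsum : δR + δB = 1)
    (α β : ℝ) (hα : 0 < α) (hβ : 0 < β)
    (hβbound : ∀ u : V, ⟪(A + B) u, u⟫ ≤ (1 + β) * ⟪B u, u⟫)
    (hαbound : ∀ u : V, ⟪(A + B) u, u⟫ ≤ (1 + α) * ⟪A u, u⟫) :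
    ∀ lam : ℝ,
      Module.End.HasEigenvalue ((δR ^ 2 • Ainv + δB ^ 2 • Binv) ∘ₗ (A + B)) lam →
      δR ^ 2 + δB ^ 2 ≤ lam ∧ lam ≤ δR ^ 2 * (1 + α) + δB ^ 2 * (1 + β) := by
  have hAnn : ∀ u : V, 0 ≤ ⟪A u, u⟫ := by
    intro u; rcases eq_or_ne u 0 with rfl | h
    · simp
    · exact (hApos u h).le
  have hBnn : ∀ u : V, 0 ≤ ⟪B u, u⟫ := by
    intro u; rcases eq_or_ne u 0 with rfl | h
    · simp
    · exact (hBpos u h).le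
  have hABsym : LinearMap.IsSymmetric (A + B) := hAsym.add hBsym
  have hABapp : ∀ u : V, ⟪(A + B) u, u⟫ = ⟪A u, u⟫ + ⟪B u, u⟫ := by
    intro u; simp [LinearMap.add_apply, inner_add_left]
  have hABnn : ∀ u : V, 0 ≤ ⟪(A + B) u, u⟫ := by
    intro u; rw [hABapp u]; exact add_nonneg (hAnn u) (hBnn u)
  intro lam hlam
  obtain ⟨v, hv⟩ := hlam.exists_hasEigenvector
  have hv0 : v ≠ 0 := hv.2
  obtain ⟨w, hw⟩ : ∃ w, w = (A + B) v := ⟨_, rfl⟩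
  obtain ⟨x, hx⟩ : ∃ x, x = Ainv w := ⟨_, rfl⟩
  obtain ⟨y, hy⟩ : ∃ y, y = Binv w := ⟨_, rfl⟩
  have hAx : A x = w := by
    rw [hx]
    have := LinearMap.ext_iff.mp hAi.1 w
    simpa using this
  have hBy : B y = w := by
    rw [hy]
    have := LinearMap.ext_iff.mp hBi.1 w
    simpa using this
  obtain ⟨q, hq⟩ : ∃ q : ℝ, q = ⟪w, v⟫ := ⟨_, rfl⟩
  obtain ⟨p, hp⟩ : ∃ p : ℝ, p = ⟪A x, x⟫ := ⟨_, rfl⟩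
  obtain ⟨r, hr⟩ : ∃ r : ℝ, r = ⟪B y, y⟫ := ⟨_, rfl⟩
  have hqAB : q = ⟪A v, v⟫ + ⟪B v, v⟫ := by
    rw [hq, hw]; exact hABapp v
  have hq_pos : 0 < q := by
    rw [hqAB]; exact add_pos (hApos v hv0) (hBpos v hv0)
  have hvw : ⟪v, w⟫ = q := by rw [hq, real_inner_comm]
  -- eigen identity
  have heig : lam * q = δR ^ 2 * p + δB ^ 2 * r := by
    have h1 : ((δR ^ 2 • Ainv + δB ^ 2 • Binv) ∘ₗ (A + B)) v = lam • v :=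
      hv.apply_eq_smul
    have h2 : δR ^ 2 • x + δB ^ 2 • y = lam • v := by
      rw [hx, hy, hw]
      simpa [LinearMap.comp_apply, LinearMap.add_apply, LinearMap.smul_apply] using h1
    have h3 : ⟪δR ^ 2 • x + δB ^ 2 • y, w⟫ = ⟪lam • v, w⟫ := by rw [h2]
    have hxw : ⟪x, w⟫ = p := by rw [← hAx, real_inner_comm, ← hp]
    have hyw : ⟪y, w⟫ = r := by rw [← hBy, real_inner_comm, ← hr]
    rw [inner_add_left, real_inner_smul_left, real_inner_smul_left,
      real_inner_smul_left, hxw, hyw, hvw] at h3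
    linarith [h3]
  have hAvv_le : ⟪A v, v⟫ ≤ q := by rw [hqAB]; linarith [hBnn v]
  have hBvv_le : ⟪B v, v⟫ ≤ q := by rw [hqAB]; linarith [hAnn v]
  have hAvx : ⟪A v, x⟫ = q :=
    calc ⟪A v, x⟫ = ⟪v, A x⟫ := hAsym v x
    _ = ⟪v, w⟫ := by rw [hAx]
    _ = q := hvw
  have hBvy : ⟪B v, y⟫ = q :=
    calc ⟪B v, y⟫ = ⟪v, B y⟫ := hBsym v y
    _ = ⟪v, w⟫ := by rw [hBy]
    _ = q := hvw
  have hqp : q ≤ p := by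
    have hcs := cs_aux A hAsym hAnn v x
    rw [hAvx, ← hp] at hcs
    nlinarith [hAnn x, hcs, hAvv_le, hq_pos, hp]
  have hqr : q ≤ r := by
    have hcs := cs_aux B hBsym hBnn v y
    rw [hBvy, ← hr] at hcs
    nlinarith [hBnn y, hcs, hBvv_le, hq_pos]
  have hABvv : ⟪(A + B) v, v⟫ = q := by rw [← hw, hq]
  have hABvx : ⟪(A + B) v, x⟫ = p := by
    rw [← hw, ← hAx, hp]
  have hABvy : ⟪(A + B) v, y⟫ = r := by
    rw [← hw, ← hBy, hr]
  have hp_le : p ≤ (1 + α) * q := by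
    obtain ⟨Z, hZ⟩ : ∃ z : ℝ, z = ⟪(A + B) x, x⟫ := ⟨_, rfl⟩
    have hcs := cs_aux (A + B) hABsym hABnn v x
    rw [hABvx, hABvv, ← hZ] at hcs
    have hbd : Z ≤ (1 + α) * p := by
      rw [hZ, hp]; exact hαbound x
    have hp_pos : 0 < p := lt_of_lt_of_le hq_pos hqp
    have h1 : q * Z ≤ q * ((1 + α) * p) :=
      mul_le_mul_of_nonneg_left hbd hq_pos.le
    have h2 : p * p ≤ ((1 + α) * q) * p := by nlinarith only [hcs, h1]
    exact le_of_mul_le_mul_right h2 hp_pos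
  have hr_le : r ≤ (1 + β) * q := by
    obtain ⟨Z, hZ⟩ : ∃ z : ℝ, z = ⟪(A + B) y, y⟫ := ⟨_, rfl⟩
    have hcs := cs_aux (A + B) hABsym hABnn v y
    rw [hABvy, hABvv, ← hZ] at hcs
    have hbd : Z ≤ (1 + β) * r := by
      rw [hZ, hr]; exact hβbound y
    have hr_pos : 0 < r := lt_of_lt_of_le hq_pos hqr
    have h1 : q * Z ≤ q * ((1 + β) * r) :=
      mul_le_mul_of_nonneg_left hbd hq_pos.le
    have h2 : r * r ≤ ((1 + β) * q) * r := by nlinarith only [hcs, h1]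
    exact le_of_mul_le_mul_right h2 hr_pos
  constructor
  · have h3 : (δR ^ 2 + δB ^ 2) * q ≤ lam * q := by
      rw [heig]; nlinarith only [hqp, hqr, sq_nonneg δR, sq_nonneg δB]
    exact le_of_mul_le_mul_right h3 hq_pos
  · have h3 : lam * q ≤ (δR ^ 2 * (1 + α) + δB ^ 2 * (1 + β)) * q := by
      rw [heig]; nlinarith only [hp_le, hr_le, sq_nonneg δR, sq_nonneg δB]
    exact le_of_mul_le_mul_right h3 hq_pos
end
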